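/- Let x_1,…,x_m; y_1,…,y_m be a partial Galois coordinate system of S over R and f a partial 1-cocycle. Then ∑_{i=1}^m f̂(x_i) · f⁻¹-tilde(y_i) = 1, where f⁻¹-tilde(y) = ∑_{g∈G} f(g) α_g(y 1_{g⁻¹}). Consequently Q_f S = S and Q_f is a faithful R-module. -/

import Mathlib

/-- A unital partial action of a group `G` on a commutative ring `S`.
The unital ideal `S_g` is `S * e g` where `e g` is a central idempotent,
and `act g` is the partial isomorphism `α_g` (extended to all of `S` by
first multiplying by the identity `e g⁻¹` of its domain ideal). -/
structure PartialAction (G : Type*) [Group G] (S : Type*) [CommRing S] where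
  e : G → S
  act : G → S → S
  e_idem : ∀ g, e g * e g = e g
  e_one : e 1 = 1
  act_one : ∀ x, act 1 x = x
  act_add : ∀ g x y, act g (x + y) = act g x + act g y
  act_mul : ∀ g x y, act g (x * y) = act g x * act g y
  act_restrict : ∀ g x, act g (x * e g⁻¹) = act g x
  act_mem : ∀ g x, act g x * e g = act g x
  act_e : ∀ g, act g (e g⁻¹) = e g
  act_inter : ∀ g h, act g (e g⁻¹ * e h) = e g * e (g * h)
  act_comp : ∀ g h x, act g (act h x * e g⁻¹) = act (g * h) (x * e h⁻¹) * e g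
  act_inv : ∀ g x, act g⁻¹ (act g (x * e g⁻¹)) = x * e g⁻¹

namespace PartialAction

variable {G : Type*} [Group G] {S : Type*} [CommRing S] (P : PartialAction G S)

/-- The subring of subinvariants `S^α`. -/
def invariants : Set S := {a | ∀ g : G, P.act g (a * P.e g⁻¹) = a * P.e g}

/-- `S ⊇ R` is a partial Galois extension: `R = S^α` and there is a
partial Galois coordinate system. -/
def IsPartialGalois [Fintype G] [DecidableEq G] (R : Subring S) : Prop :=
  ((R : Set S) = P.invariants) ∧
    ∃ m : ℕ, ∃ x y : Fin m → S, ∀ g : G,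
      (∑ i : Fin m, x i * P.act g (y i * P.e g⁻¹)) = if g = 1 then 1 else 0

/-- A partial 1-cocycle with values in `S`: `f g` is invertible in the
unital ideal `S e g` with inverse `finv g`, and the cocycle identity holds. -/
structure Cocycle where
  f : G → S
  finv : G → S
  f_mem : ∀ g, f g * P.e g = f g
  finv_mem : ∀ g, finv g * P.e g = finv g
  f_mul_finv : ∀ g, f g * finv g = P.e g
  cocycle : ∀ g h, f (g * h) * P.e g = f g * P.act g (f h * P.e g⁻¹)

variable {P}

theorem act_zero (g : G) : P.act g 0 = 0 := by
  have := P.act_add g 0 0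
  simpa using this.symm

/-- The set `Q_f = {a ∈ S : α_g(a 1_{g⁻¹}) = f(g) a for all g}` attached to a map `f : G → S`. -/
def Qset (P : PartialAction G S) (f : G → S) : Set S :=
  {a | ∀ g : G, P.act g (a * P.e g⁻¹) = f g * a}

/-- `Q_f` as an `R`-submodule of `S`, where `R` is a subring of invariants. -/
def Qmod (P : PartialAction G S) (R : Subring S)
    (hR : ∀ r ∈ R, ∀ g : G, P.act g (r * P.e g⁻¹) = r * P.e g)
    (f : G → S) : Submodule R S where
  carrier := Qset P f
  zero_mem' := by
    intro g
    simp [Qset, act_zero]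
  add_mem' := by
    intro a b ha hb g
    have := P.act_add g (a * P.e g⁻¹) (b * P.e g⁻¹)
    rw [Qset] at *
    rw [add_mul, this, ha g, hb g, mul_add]
  smul_mem' := by
    intro c x hx g
    have hc : (c : S) ∈ (R : Set S) := c.2
    have hcx : c • x = (c : S) * x := Subring.smul_def c x
    have hx' : ∀ g : G, P.act g (x * P.e g⁻¹) = f g * x := hx
    rw [hcx]
    have h1 : P.act g ((c : S) * x * P.e g⁻¹) = P.act g ((c : S)) * P.act g x := by
      rw [P.act_restrict, P.act_mul]
    have h2 : P.act g ((c : S)) = (c : S) * P.e g := by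
      rw [← P.act_restrict g (c : S), hR c c.2 g]
    have h3 : P.act g x = f g * x := by
      rw [← P.act_restrict g x]; exact hx' g
    have h4 : (f g * x) * P.e g = f g * x := by
      have := P.act_mem g (x * P.e g⁻¹)
      rw [P.act_restrict, h3] at this
      exact this
    rw [h1, h2, h3]
    have h5 : (c : S) * P.e g * (f g * x) = (c : S) * (f g * x * P.e g) := by ring
    rw [h5, h4]
    ring

end PartialAction

namespace PGAux

open PartialAction

variable {G : Type*} [Group G] {S : Type*} [CommRing S] (P : PartialAction G S)

theorem actr (g : G) (x : S) : P.act g x = P.act g (x * P.e g⁻¹) :=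
  (P.act_restrict g x).symm

theorem act_sum {ι : Type*} (s : Finset ι) (g : G) (f : ι → S) :
    P.act g (∑ i ∈ s, f i) = ∑ i ∈ s, P.act g (f i) := by
  classical
  induction s using Finset.induction with
  | empty => simpa using PartialAction.act_zero (P := P) g
  | @insert a s h ih => rw [Finset.sum_insert h, Finset.sum_insert h, P.act_add, ih]

theorem act_e' (h g : G) : P.act h (P.e (h⁻¹ * g)) = P.e h * P.e g := by
  rw [actr P h, mul_comm, P.act_inter, mul_inv_cancel_left]

theorem shiftE (h g : G) (v : S) :
    P.act h (v * P.e (h⁻¹ * g)) = P.act h v * P.e g := by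
  rw [P.act_mul, act_e' P h g, ← mul_assoc, P.act_mem]

theorem compE (g h : G) (v : S) :
    P.act h (v * P.e h⁻¹) * P.e g
      = P.act g (P.act (g⁻¹ * h) (v * P.e (g⁻¹ * h)⁻¹) * P.e g⁻¹) := by
  have hc := P.act_comp g (g⁻¹ * h) v
  rw [mul_inv_cancel_left] at hc
  have h1 : ((g⁻¹ * h)⁻¹ : G) = h⁻¹ * g := by group
  rw [h1, shiftE P h g v] at hc
  rw [P.act_restrict h v, P.act_restrict (g⁻¹ * h) v, hc, mul_assoc, P.e_idem]

theorem orth [Fintype G] [DecidableEq G] {m : ℕ} (x y : Fin m → S)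
    (hcoord : ∀ g : G, (∑ i : Fin m, x i * P.act g (y i * P.e g⁻¹)) =
      if g = 1 then 1 else 0) (g h : G) :
    (∑ i : Fin m, P.act g (x i * P.e g⁻¹) * P.act h (y i * P.e h⁻¹)) * P.e g
      = if h = g then P.e g else 0 := by
  have step : ∀ i : Fin m,
      P.act g (x i * P.e g⁻¹) * P.act h (y i * P.e h⁻¹) * P.e g
        = P.act g (x i * P.act (g⁻¹ * h) (y i * P.e (g⁻¹ * h)⁻¹) * P.e g⁻¹) := by
    intro i
    rw [mul_assoc, compE P g h (y i), ← P.act_mul]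
    congr 1
    have : (x i * P.e g⁻¹) * (P.act (g⁻¹ * h) (y i * P.e (g⁻¹ * h)⁻¹) * P.e g⁻¹)
        = x i * P.act (g⁻¹ * h) (y i * P.e (g⁻¹ * h)⁻¹) * (P.e g⁻¹ * P.e g⁻¹) := by
      ring
    rw [this, P.e_idem]
  calc (∑ i : Fin m, P.act g (x i * P.e g⁻¹) * P.act h (y i * P.e h⁻¹)) * P.e g
      = ∑ i : Fin m, P.act g (x i * P.e g⁻¹) * P.act h (y i * P.e h⁻¹) * P.e g :=
        Finset.sum_mul _ _ _
    _ = ∑ i : Fin m,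
          P.act g (x i * P.act (g⁻¹ * h) (y i * P.e (g⁻¹ * h)⁻¹) * P.e g⁻¹) :=
        Finset.sum_congr rfl fun i _ => step i
    _ = P.act g ((∑ i : Fin m, x i * P.act (g⁻¹ * h) (y i * P.e (g⁻¹ * h)⁻¹)) * P.e g⁻¹) := by
        rw [Finset.sum_mul, act_sum]
    _ = P.act g ((if g⁻¹ * h = 1 then (1:S) else 0) * P.e g⁻¹) := by
        rw [hcoord (g⁻¹ * h)]
    _ = if h = g then P.e g else 0 := by
        by_cases hc : h = g
        · subst hc
          simp [P.act_e]
        · have : g⁻¹ * h ≠ 1 := fun hh => hc (by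
            have := congrArg (g * ·) hh
            simpa [mul_inv_cancel_left] using this)
          simp only [this, if_neg, if_false, hc, zero_mul]
          simpa using PartialAction.act_zero (P := P) g

theorem star (c : P.Cocycle) (k h : G) :
    P.act k (c.finv (k⁻¹ * h)) * P.e h * P.e k = c.f k * c.finv h := by
  have hcoc := c.cocycle k (k⁻¹ * h)
  rw [mul_inv_cancel_left] at hcoc
  have key := congrArg
    (fun t : S => t * (c.finv h * P.act k (c.finv (k⁻¹ * h)))) hcoc
  have hl : c.f h * P.e k * (c.finv h * P.act k (c.finv (k⁻¹ * h)))
      = (c.f h * c.finv h) * P.e k * P.act k (c.finv (k⁻¹ * h)) := by ring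
  rw [hl, c.f_mul_finv] at key
  have hr : c.f k * P.act k (c.f (k⁻¹ * h) * P.e k⁻¹) *
        (c.finv h * P.act k (c.finv (k⁻¹ * h)))
      = c.f k * (P.act k (c.f (k⁻¹ * h) * P.e k⁻¹) * P.act k (c.finv (k⁻¹ * h)))
        * c.finv h := by ring
  rw [hr, ← P.act_mul] at key
  have he : c.f (k⁻¹ * h) * P.e k⁻¹ * c.finv (k⁻¹ * h)
      = (c.f (k⁻¹ * h) * c.finv (k⁻¹ * h)) * P.e k⁻¹ := by ring
  rw [he, c.f_mul_finv, ← mul_comm (P.e k⁻¹) (P.e (k⁻¹ * h)),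
    P.act_inter, mul_inv_cancel_left] at key
  -- key : e h * e k * act k finv' = f k * (e k * e h) * finv h
  calc P.act k (c.finv (k⁻¹ * h)) * P.e h * P.e k
      = P.e h * P.e k * P.act k (c.finv (k⁻¹ * h)) := by ring
    _ = c.f k * (P.e k * P.e h) * c.finv h := key
    _ = (c.f k * P.e k) * (c.finv h * P.e h) := by ring
    _ = c.f k * c.finv h := by rw [c.f_mem, c.finv_mem]

theorem fhat_mem [Fintype G] (c : P.Cocycle) (w z : S) (k : G) :
    P.act k ((∑ g : G, c.finv g * P.act g (w * z * P.e g⁻¹)) * P.e k⁻¹)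
      = c.f k * ∑ g : G, c.finv g * P.act g (w * z * P.e g⁻¹) := by
  rw [← actr P k, act_sum]
  have step : ∀ g : G, P.act k (c.finv g * P.act g (w * z * P.e g⁻¹))
      = P.act k (c.finv g) * (P.act (k * g) (w * z * P.e g⁻¹) * P.e k) := by
    intro g
    rw [P.act_mul]
    congr 1
    rw [actr P k (P.act g (w * z * P.e g⁻¹)), P.act_restrict g (w * z)]
    exact P.act_comp k g (w * z)
  rw [Finset.sum_congr rfl fun g _ => step g]
  have reidx : (∑ g : G, P.act k (c.finv g) * (P.act (k * g) (w * z * P.e g⁻¹) * P.e k))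
      = ∑ h : G, P.act k (c.finv (k⁻¹ * h)) *
          (P.act (k * (k⁻¹ * h)) (w * z * P.e (k⁻¹ * h)⁻¹) * P.e k) :=
    (Fintype.sum_equiv (Equiv.mulLeft k⁻¹) _ _ fun h => rfl).symm
  rw [reidx, Finset.mul_sum]
  refine Finset.sum_congr rfl fun h _ => ?_
  have h1 : ((k⁻¹ * h)⁻¹ : G) = h⁻¹ * k := by group
  rw [mul_inv_cancel_left, h1, shiftE P h k (w * z)]
  rw [← P.act_restrict h (w * z)]
  calc P.act k (c.finv (k⁻¹ * h)) * (P.act h (w * z * P.e h⁻¹) * P.e k * P.e k)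
      = P.act k (c.finv (k⁻¹ * h)) * ((P.act h (w * z * P.e h⁻¹) * P.e h) *
          (P.e k * P.e k)) := by rw [P.act_mem]; ring
    _ = (P.act k (c.finv (k⁻¹ * h)) * P.e h * P.e k) *
          P.act h (w * z * P.e h⁻¹) := by rw [P.e_idem]; ring
    _ = c.f k * c.finv h * P.act h (w * z * P.e h⁻¹) := by rw [star P c k h]
    _ = c.f k * (c.finv h * P.act h (w * z * P.e h⁻¹)) := by ring

end PGAux

/-- `∑ᵢ f̂(xᵢ) (f⁻¹)~(yᵢ) = 1`, hence `Q_f S = S` and `Q_f` is faithful. -/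
theorem hat_coordinates_sum_one {G : Type*} [CommGroup G] [Fintype G] [DecidableEq G]
    {S : Type*} [CommRing S] (P : PartialAction G S) (R : Subring S)
    (hGal : P.IsPartialGalois R)
    (m : ℕ) (x y : Fin m → S)
    (hcoord : ∀ g : G, (∑ i : Fin m, x i * P.act g (y i * P.e g⁻¹)) =
      if g = 1 then 1 else 0)
    (w : S) (hw : (∑ g : G, P.act g (w * P.e g⁻¹)) = 1)
    (c : P.Cocycle) (Fhat Gtilde : S → S)
    (hFhat : ∀ z, Fhat z = ∑ g : G, c.finv g * P.act g (w * z * P.e g⁻¹))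
    (hGtilde : ∀ z, Gtilde z = ∑ g : G, c.f g * P.act g (z * P.e g⁻¹)) :
    (∑ i : Fin m, Fhat (x i) * Gtilde (y i)) = 1 ∧
      Ideal.span (PartialAction.Qset P c.f) = ⊤ ∧
      (∀ r : S, r ∈ R → (∀ q ∈ PartialAction.Qset P c.f, r * q = 0) → r = 0) := by
  classical
  have main1 : (∑ i : Fin m, Fhat (x i) * Gtilde (y i)) = 1 := by
    have expand : (∑ i : Fin m, Fhat (x i) * Gtilde (y i))
        = ∑ g : G, ∑ h : G, ∑ i : Fin m,
            (c.finv g * P.act g (w * x i * P.e g⁻¹)) *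
              (c.f h * P.act h (y i * P.e h⁻¹)) := by
      simp_rw [hFhat, hGtilde, Finset.sum_mul_sum]
      rw [Finset.sum_comm]
      exact Finset.sum_congr rfl fun g _ => Finset.sum_comm
    have inner : ∀ g h : G, (∑ i : Fin m,
        (c.finv g * P.act g (w * x i * P.e g⁻¹)) *
          (c.f h * P.act h (y i * P.e h⁻¹)))
        = c.finv g * c.f h * P.act g (w * P.e g⁻¹) *
            (if h = g then P.e g else 0) := by
      intro g h
      have t1 : ∀ i : Fin m,
          (c.finv g * P.act g (w * x i * P.e g⁻¹)) *
            (c.f h * P.act h (y i * P.e h⁻¹))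
          = c.finv g * c.f h * P.act g (w * P.e g⁻¹) *
              (P.act g (x i * P.e g⁻¹) * P.act h (y i * P.e h⁻¹)) := by
        intro i
        have hsplit : P.act g (w * x i * P.e g⁻¹)
            = P.act g (w * P.e g⁻¹) * P.act g (x i * P.e g⁻¹) := by
          have h2 : (w * P.e g⁻¹) * (x i * P.e g⁻¹)
              = w * x i * (P.e g⁻¹ * P.e g⁻¹) := by ring
          rw [← P.act_mul, h2, P.e_idem]
        rw [hsplit]; ring
      calc (∑ i : Fin m, (c.finv g * P.act g (w * x i * P.e g⁻¹)) *
              (c.f h * P.act h (y i * P.e h⁻¹)))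
          = ∑ i : Fin m, c.finv g * c.f h * P.act g (w * P.e g⁻¹) *
              (P.act g (x i * P.e g⁻¹) * P.act h (y i * P.e h⁻¹)) :=
            Finset.sum_congr rfl fun i _ => t1 i
        _ = c.finv g * c.f h * P.act g (w * P.e g⁻¹) *
              (∑ i : Fin m, P.act g (x i * P.e g⁻¹) * P.act h (y i * P.e h⁻¹)) :=
            (Finset.mul_sum _ _ _).symm
        _ = c.finv g * c.f h * P.act g (w * P.e g⁻¹) *
              ((∑ i : Fin m, P.act g (x i * P.e g⁻¹) * P.act h (y i * P.e h⁻¹))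
                * P.e g) := by
            conv_lhs => rw [← P.act_mem g (w * P.e g⁻¹)]
            ring
        _ = c.finv g * c.f h * P.act g (w * P.e g⁻¹) *
              (if h = g then P.e g else 0) := by
            rw [PGAux.orth P x y hcoord g h]
    have col : ∀ g : G, (∑ h : G, c.finv g * c.f h * P.act g (w * P.e g⁻¹) *
        (if h = g then P.e g else 0)) = P.act g (w * P.e g⁻¹) := by
      intro g
      have : (∑ h : G, c.finv g * c.f h * P.act g (w * P.e g⁻¹) *
          (if h = g then P.e g else 0))
          = ∑ h : G, (if h = g then
              c.finv g * c.f h * P.act g (w * P.e g⁻¹) * P.e g else 0) := by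
        refine Finset.sum_congr rfl fun h _ => ?_
        by_cases hc : h = g <;> simp [hc]
      rw [this, Finset.sum_ite_eq' Finset.univ g
        (fun h => c.finv g * c.f h * P.act g (w * P.e g⁻¹) * P.e g)]
      simp only [Finset.mem_univ, if_true]
      rw [mul_comm (c.finv g) (c.f g), c.f_mul_finv]
      have h3 : P.e g * P.act g (w * P.e g⁻¹) * P.e g
          = P.act g (w * P.e g⁻¹) * P.e g * P.e g := by ring
      rw [h3, mul_assoc, P.e_idem, P.act_mem]
    rw [expand]
    calc (∑ g : G, ∑ h : G, ∑ i : Fin m,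
            (c.finv g * P.act g (w * x i * P.e g⁻¹)) *
              (c.f h * P.act h (y i * P.e h⁻¹)))
        = ∑ g : G, ∑ h : G, c.finv g * c.f h * P.act g (w * P.e g⁻¹) *
            (if h = g then P.e g else 0) :=
          Finset.sum_congr rfl fun g _ => Finset.sum_congr rfl fun h _ => inner g h
      _ = ∑ g : G, P.act g (w * P.e g⁻¹) :=
          Finset.sum_congr rfl fun g _ => col g
      _ = 1 := hw
  have qmem : ∀ z : S, Fhat z ∈ PartialAction.Qset P c.f := by
    intro z g
    rw [hFhat z]
    exact PGAux.fhat_mem P c w z g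
  refine ⟨main1, ?_, ?_⟩
  · rw [Ideal.eq_top_iff_one, ← main1]
    exact Ideal.sum_mem _ fun i _ =>
      Ideal.mul_mem_right _ _ (Ideal.subset_span (qmem (x i)))
  · intro r _ h0
    have h1 : r = ∑ i : Fin m, (r * Fhat (x i)) * Gtilde (y i) := by
      conv_lhs => rw [← mul_one r, ← main1, Finset.mul_sum]
      exact Finset.sum_congr rfl fun i _ => by ring
    rw [h1]
    exact Finset.sum_eq_zero fun i _ => by
      rw [h0 (Fhat (x i)) (qmem (x i)), zero_mul]
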